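/- Let {e_k} be an orthonormal basis of H, m ≥ 1, and x_k = e_1 + k e_2 + ... + k^{m−1} e_m + e_{m+k} for k ≥ 1. Then {x_k} is complete and minimal with biorthogonal system {e_{m+k}}, and the defect of {x_k} with respect to σ ⊆ ℕ equals m if σ is finite and 0 if σ is infinite; in particular the set of all defects of this system is {0, m}. -/

import Mathlib

set_option linter.unusedSectionVars false
set_option maxHeartbeats 1000000


open Filter Topology

noncomputable section

variable {H : Type*} [NormedAddCommGroup H] [InnerProductSpace ℂ H] [CompleteSpace H]

/-- Closed linear span of a set of vectors. -/
def clSpan (s : Set H) : Submodule ℂ H := (Submodule.span ℂ s).topologicalClosure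

instance (s : Set H) : CompleteSpace (clSpan s) :=
  (Submodule.isClosed_topologicalClosure _).completeSpace_coe

/-- Orthogonal projection onto the closed linear span of `s`, as a map `H → H`. -/
def projS (s : Set H) : H →L[ℂ] H :=
  (clSpan s).subtypeL ∘L (clSpan s).orthogonalProjectionOnto

/-- The system `x` is complete: its closed linear span is all of `H`. -/
def IsCompleteSystem (x : ℕ → H) : Prop := clSpan (Set.range x) = ⊤

/-- The system `x` is minimal: no vector lies in the closed span of the others. -/
def IsMinimalSystem (x : ℕ → H) : Prop :=
  ∀ k, x k ∉ clSpan (x '' {j | j ≠ k})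

/-- `y` is biorthogonal to `x`. -/
def IsBiorthogonal (x y : ℕ → H) : Prop :=
  ∀ k j, (inner ℂ (x k) (y j) : ℂ) = if k = j then 1 else 0
local notation "⟪" x ", " y "⟫" => @inner ℂ _ _ x y

theorem clSpan_orthogonal' (s : Set H) : (clSpan s)ᗮ = (Submodule.span ℂ s)ᗮ := by
  rw [clSpan, ← Submodule.orthogonal_orthogonal_eq_closure,
    Submodule.triorthogonal_eq_orthogonal]

theorem mem_span_orthogonal_iff' {s : Set H} {h : H} :
    h ∈ (Submodule.span ℂ s)ᗮ ↔ ∀ v ∈ s, ⟪v, h⟫ = 0 := by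
  constructor
  · intro hh v hv
    exact (Submodule.mem_orthogonal _ _).mp hh v (Submodule.subset_span hv)
  · intro hh
    rw [Submodule.mem_orthogonal]
    intro u hu
    refine Submodule.span_induction (fun v hv => hh v hv) (inner_zero_left h) ?_ ?_ hu
    · intro a b _ _ ha hb; rw [inner_add_left, ha, hb, add_zero]
    · intro r a _ ha; rw [inner_smul_left, ha, mul_zero]

theorem inner_basis_tendsto' (b : HilbertBasis ℕ ℂ H) (h : H) :
    Tendsto (fun n => (⟪b n, h⟫ : ℂ)) atTop (𝓝 0) := by
  have hs : Summable fun n => ‖(⟪b n, h⟫ : ℂ)‖ ^ 2 :=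
    Orthonormal.inner_products_summable h b.orthonormal
  rw [tendsto_zero_iff_norm_tendsto_zero]
  have h2 := (Real.continuous_sqrt.tendsto 0).comp hs.tendsto_atTop_zero
  have he : (fun n => Real.sqrt (‖(⟪b n, h⟫ : ℂ)‖ ^ 2)) = fun n => ‖(⟪b n, h⟫ : ℂ)‖ := by
    funext n; exact Real.sqrt_sq (norm_nonneg _)
  simpa [Function.comp_def, he, Real.sqrt_zero] using h2

theorem eq_zero_of_inner_basis' (b : HilbertBasis ℕ ℂ H) (h : H)
    (hz : ∀ n, (⟪b n, h⟫ : ℂ) = 0) : h = 0 := by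
  apply b.repr.injective
  rw [map_zero]
  ext n
  simp [HilbertBasis.repr_apply_apply, hz n]

theorem poly_coeffs_zero' (m : ℕ) (c : ℕ → ℂ) (t : ℕ → ℕ) (ht : StrictMono t)
    (hlim : Tendsto (fun n => ∑ j ∈ Finset.range m, c j * ((t n : ℂ) + 1) ^ j) atTop (𝓝 0)) :
    ∀ j < m, c j = 0 := by
  set P : Polynomial ℂ := ∑ j ∈ Finset.range m, Polynomial.C (c j) * Polynomial.X ^ j with hP
  have heval : ∀ z : ℂ, P.eval z = ∑ j ∈ Finset.range m, c j * z ^ j := by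
    intro z; simp [hP, Polynomial.eval_finset_sum]
  have hcoeff : ∀ j < m, P.coeff j = c j := by
    intro j hj
    simp [hP, Polynomial.finset_sum_coeff, Polynomial.coeff_C_mul, Polynomial.coeff_X_pow,
      Finset.mem_range.mpr hj]
  have hP0 : P = 0 := by
    by_contra hne
    have hlim' : Tendsto (fun n => ‖P.eval ((t n : ℂ) + 1)‖) atTop (𝓝 0) := by
      have := hlim.norm
      simpa [heval] using this
    rcases lt_or_ge 0 P.degree with hdeg | hdeg
    · have hz : Tendsto (fun n => ‖((t n : ℂ) + 1)‖) atTop atTop := by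
        have he : ∀ n, ‖((t n : ℂ) + 1)‖ = (t n : ℝ) + 1 := by
          intro n
          rw [show ((t n : ℂ) + 1) = ((t n + 1 : ℕ) : ℂ) by push_cast; ring,
            Complex.norm_natCast]
          push_cast; ring
        rw [show (fun n => ‖((t n : ℂ) + 1)‖) = fun n => (t n : ℝ) + 1 from funext he]
        apply tendsto_atTop_mono (f := fun n : ℕ => (n : ℝ))
        · intro n
          have h1 : (n : ℝ) ≤ (t n : ℝ) := Nat.cast_le.mpr ht.le_apply
          linarith
        · exact tendsto_natCast_atTop_atTop
      have := P.tendsto_norm_atTop hdeg hz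
      exact absurd this (not_tendsto_atTop_of_tendsto_nhds hlim')
    · have hC : P = Polynomial.C (P.coeff 0) := Polynomial.eq_C_of_degree_le_zero hdeg
      have h0 : P.coeff 0 = 0 := by
        have hconst : Tendsto (fun _ : ℕ => ‖P.coeff 0‖) atTop (𝓝 ‖P.coeff 0‖) :=
          tendsto_const_nhds
        have heq : (fun n => ‖P.eval ((t n : ℂ) + 1)‖) = fun _ : ℕ => ‖P.coeff 0‖ := by
          funext n; rw [hC]; simp
        rw [heq] at hlim'
        have := tendsto_nhds_unique hlim' hconst
        simpa using this.symm
      rw [hC, h0, map_zero] at hne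
      exact hne rfl
  intro j hj
  rw [← hcoeff j hj, hP0, Polynomial.coeff_zero]

/-- For an orthonormal basis `b` (realizing `e_1, e_2, …` as `b 0, b 1, …`) and `m ≥ 1`, the
system `x_k = e_1 + k e_2 + … + k^{m-1} e_m + e_{m+k}` (here `x k = ∑_{j<m} (k+1)^j b j +
b (m+k)` for `k : ℕ`) is complete and minimal, with biorthogonal system `{e_{m+k}}`; its
defect with respect to `σ ⊆ ℕ` equals `m` when `σ` is finite and `0` when `σ` is infinite,
so the set of all of its defects is exactly `{0, m}`. -/
theorem defects_zero_m [TopologicalSpace.SeparableSpace H]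
    (b : HilbertBasis ℕ ℂ H) (m : ℕ) (hm : 1 ≤ m)
    (x y : ℕ → H)
    (hx : ∀ k : ℕ, x k = (∑ j ∈ Finset.range m, ((k + 1 : ℂ)) ^ j • b j) + b (m + k))
    (hy : ∀ k : ℕ, y k = b (m + k)) :
    IsCompleteSystem x ∧ IsMinimalSystem x ∧ IsBiorthogonal x y ∧
    (∀ σ : Set ℕ, σ.Finite →
      Module.rank ℂ ↥((clSpan (x '' σ ∪ y '' σᶜ))ᗮ) = (m : Cardinal)) ∧
    (∀ σ : Set ℕ, σ.Infinite →
      Module.rank ℂ ↥((clSpan (x '' σ ∪ y '' σᶜ))ᗮ) = 0) ∧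
    {d : Cardinal | ∃ σ : Set ℕ, d = Module.rank ℂ ↥((clSpan (x '' σ ∪ y '' σᶜ))ᗮ)} =
      {0, (m : Cardinal)} := by
  classical
  have hbb : ∀ i j : ℕ, (⟪b i, b j⟫ : ℂ) = if i = j then 1 else 0 :=
    orthonormal_iff_ite.mp b.orthonormal
  -- inner product of x k with any vector
  have hinner_x : ∀ (k : ℕ) (h : H),
      (⟪x k, h⟫ : ℂ) = (∑ j ∈ Finset.range m, ((k : ℂ) + 1) ^ j * ⟪b j, h⟫) + ⟪b (m + k), h⟫ := by
    intro k h
    rw [hx k, inner_add_left, sum_inner]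
    congr 1
    refine Finset.sum_congr rfl fun j _ => ?_
    rw [inner_smul_left]
    congr 1
    simp [map_pow, map_add, map_one]
  -- membership characterization of the orthogonal complement
  have hmem : ∀ (σ : Set ℕ) (h : H), h ∈ (clSpan (x '' σ ∪ y '' σᶜ))ᗮ ↔
      (∀ k ∈ σ, (∑ j ∈ Finset.range m, ((k : ℂ) + 1) ^ j * ⟪b j, h⟫) + ⟪b (m + k), h⟫ = 0) ∧
      (∀ k ∉ σ, (⟪b (m + k), h⟫ : ℂ) = 0) := by
    intro σ h
    rw [clSpan_orthogonal', mem_span_orthogonal_iff']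
    constructor
    · intro hh
      refine ⟨fun k hk => ?_, fun k hk => ?_⟩
      · rw [← hinner_x]; exact hh _ (Or.inl ⟨k, hk, rfl⟩)
      · rw [← hy]; exact hh _ (Or.inr ⟨k, hk, rfl⟩)
    · rintro ⟨h1, h2⟩ v (⟨k, hk, rfl⟩ | ⟨k, hk, rfl⟩)
      · rw [hinner_x]; exact h1 k hk
      · rw [hy]; exact h2 k hk
  -- biorthogonality
  have hbio : IsBiorthogonal x y := by
    intro k j
    show (⟪x k, y j⟫ : ℂ) = _
    rw [hy, hinner_x]
    rw [Finset.sum_eq_zero fun i hi => by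
      rw [hbb, if_neg (by have := Finset.mem_range.mp hi; omega), mul_zero]]
    rw [zero_add, hbb]
    by_cases hkj : k = j
    · simp [hkj]
    · rw [if_neg (by omega), if_neg hkj]
  -- completeness
  have hcomp : IsCompleteSystem x := by
    rw [IsCompleteSystem, clSpan, Submodule.topologicalClosure_eq_top_iff,
      Submodule.eq_bot_iff]
    intro h hh
    have hh' : ∀ k : ℕ,
        (∑ j ∈ Finset.range m, ((k : ℂ) + 1) ^ j * ⟪b j, h⟫) + ⟪b (m + k), h⟫ = 0 := by
      intro k
      rw [← hinner_x]
      exact mem_span_orthogonal_iff'.mp hh _ ⟨k, rfl⟩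
    have hc0 : ∀ j < m, (⟪b j, h⟫ : ℂ) = 0 := by
      apply poly_coeffs_zero' m _ id strictMono_id
      have key : ∀ n : ℕ, ∑ j ∈ Finset.range m, (⟪b j, h⟫ : ℂ) * ((n : ℂ) + 1) ^ j
          = - ⟪b (m + n), h⟫ := by
        intro n
        have h1 := hh' n
        rw [Finset.sum_congr rfl fun j _ => mul_comm (⟪b j, h⟫ : ℂ) (((n : ℂ) + 1) ^ j)]
        linear_combination h1
      have htend : Tendsto (fun n : ℕ => (⟪b (m + n), h⟫ : ℂ)) atTop (𝓝 0) :=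
        (inner_basis_tendsto' b h).comp (tendsto_atTop_mono (fun n => Nat.le_add_left n m)
          tendsto_id)
      have hgoal : Tendsto (fun n : ℕ => ∑ j ∈ Finset.range m,
          (⟪b j, h⟫ : ℂ) * ((n : ℂ) + 1) ^ j) atTop (𝓝 0) := by
        rw [show (fun n : ℕ => ∑ j ∈ Finset.range m, (⟪b j, h⟫ : ℂ) * ((n : ℂ) + 1) ^ j)
            = fun n : ℕ => - (⟪b (m + n), h⟫ : ℂ) from funext fun n => key n]
        simpa using htend.neg
      exact hgoal
    apply eq_zero_of_inner_basis' b h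
    intro n
    rcases Nat.lt_or_ge n m with hn | hn
    · exact hc0 n hn
    · obtain ⟨k, rfl⟩ : ∃ k, n = m + k := ⟨n - m, by omega⟩
      have h1 := hh' k
      rwa [Finset.sum_eq_zero (fun j hj => by
        rw [hc0 j (Finset.mem_range.mp hj), mul_zero]), zero_add] at h1
  -- minimality
  have hmin : IsMinimalSystem x := by
    intro k hk
    have hyk : y k ∈ (clSpan (x '' {j | j ≠ k}))ᗮ := by
      rw [clSpan_orthogonal', mem_span_orthogonal_iff']
      rintro v ⟨j, hj, rfl⟩
      rw [hbio j k, if_neg hj]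
    have := (Submodule.mem_orthogonal _ _).mp hyk (x k) hk
    rw [hbio k k, if_pos rfl] at this
    exact one_ne_zero this
  -- finite case
  have hfin : ∀ σ : Set ℕ, σ.Finite →
      Module.rank ℂ ↥((clSpan (x '' σ ∪ y '' σᶜ))ᗮ) = (m : Cardinal) := by
    intro σ hσ
    set v : Fin m → H := fun i =>
      b i - ∑ k ∈ hσ.toFinset, ((k : ℂ) + 1) ^ (i : ℕ) • b (m + k) with hvdef
    have hbv1 : ∀ (n : ℕ) (i : Fin m), n < m → (⟪b n, v i⟫ : ℂ) = if n = (i : ℕ) then 1 else 0 := by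
      intro n i hn
      rw [hvdef]
      simp only [inner_sub_right, inner_sum, inner_smul_right]
      rw [Finset.sum_eq_zero fun k _ => by rw [hbb, if_neg (by omega), mul_zero]]
      rw [sub_zero, hbb]
    have hbv2 : ∀ (k : ℕ) (i : Fin m),
        (⟪b (m + k), v i⟫ : ℂ) = - (if k ∈ σ then ((k : ℂ) + 1) ^ (i : ℕ) else 0) := by
      intro k i
      rw [hvdef]
      simp only [inner_sub_right, inner_sum, inner_smul_right, hbb]
      rw [if_neg (by have := i.isLt; omega), zero_sub]
      congr 1
      have hcond : ∀ k' : ℕ, (m + k = m + k') = (k = k') := by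
        intro k'; simp only [eq_iff_iff]; omega
      simp only [hcond]
      simp only [mul_ite, mul_one, mul_zero]
      rw [Finset.sum_ite_eq hσ.toFinset k fun k' => ((k' : ℂ) + 1) ^ (i : ℕ)]
      simp [Set.Finite.mem_toFinset]
    have hvW : ∀ i : Fin m, v i ∈ (clSpan (x '' σ ∪ y '' σᶜ))ᗮ := by
      intro i
      rw [hmem σ (v i)]
      constructor
      · intro k hk
        have e1 : ∑ j ∈ Finset.range m, ((k : ℂ) + 1) ^ j * ⟪b j, v i⟫
            = ((k : ℂ) + 1) ^ (i : ℕ) := by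
          rw [Finset.sum_congr rfl fun j hj => by rw [hbv1 j i (Finset.mem_range.mp hj)]]
          simp only [mul_ite, mul_one, mul_zero]
          rw [Finset.sum_ite_eq' (Finset.range m) (i : ℕ) fun j => ((k : ℂ) + 1) ^ j]
          simp [i.isLt]
        rw [e1, hbv2, if_pos hk]
        ring
      · intro k hk
        rw [hbv2, if_neg hk, neg_zero]
    have hspan : ∀ h : H, h ∈ (clSpan (x '' σ ∪ y '' σᶜ))ᗮ →
        h = ∑ i : Fin m, (⟪b (i : ℕ), h⟫ : ℂ) • v i := by
      intro h hh
      obtain ⟨h1, h2⟩ := (hmem σ h).mp hh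
      have hz : ∀ n, (⟪b n, h - ∑ i : Fin m, (⟪b (i : ℕ), h⟫ : ℂ) • v i⟫ : ℂ) = 0 := by
        intro n
        rw [inner_sub_right, inner_sum]
        simp only [inner_smul_right]
        rcases Nat.lt_or_ge n m with hn | hn
        · rw [Finset.sum_congr rfl fun i _ => by rw [hbv1 n i hn]]
          have hcond : ∀ i : Fin m, (n = (i : ℕ)) = ((⟨n, hn⟩ : Fin m) = i) := by
            intro i; simp only [eq_iff_iff, Fin.ext_iff]
          simp only [hcond]
          simp only [mul_ite, mul_one, mul_zero]
          rw [Finset.sum_ite_eq Finset.univ (⟨n, hn⟩ : Fin m)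
            (fun i => (⟪b (i : ℕ), h⟫ : ℂ))]
          simp
        · obtain ⟨k, rfl⟩ : ∃ k, n = m + k := ⟨n - m, by omega⟩
          rw [Finset.sum_congr rfl fun i _ => by rw [hbv2 k i]]
          by_cases hk : k ∈ σ
          · simp only [if_pos hk]
            have h1k := h1 k hk
            have hsum : ∑ i : Fin m, (⟪b (i : ℕ), h⟫ : ℂ) * -(((k : ℂ) + 1) ^ (i : ℕ))
                = - ∑ j ∈ Finset.range m, ((k : ℂ) + 1) ^ j * ⟪b j, h⟫ := by
              rw [← Finset.sum_neg_distrib]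
              rw [← Fin.sum_univ_eq_sum_range (fun j => -(((k : ℂ) + 1) ^ j * ⟪b j, h⟫)) m]
              refine Finset.sum_congr rfl fun i _ => by ring
            rw [hsum]
            have : (⟪b (m + k), h⟫ : ℂ) = - ∑ j ∈ Finset.range m, ((k : ℂ) + 1) ^ j * ⟪b j, h⟫ := by
              linear_combination h1k
            rw [this]
            ring
          · simp only [if_neg hk]
            rw [h2 k hk]
            simp
      have := eq_zero_of_inner_basis' b _ hz
      rw [sub_eq_zero] at this
      exact this
    have hli : LinearIndependent ℂ v := by
      rw [Fintype.linearIndependent_iff]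
      intro g hg i
      have hgi := congrArg (fun z => (⟪b (i : ℕ), z⟫ : ℂ)) hg
      simp only [inner_sum, inner_smul_right, inner_zero_right] at hgi
      rw [Finset.sum_congr rfl fun j _ => by rw [hbv1 _ j i.isLt]] at hgi
      have hcond : ∀ j : Fin m, ((i : ℕ) = (j : ℕ)) = (i = j) := by
        intro j; simp only [eq_iff_iff, Fin.ext_iff]
      simp only [hcond] at hgi
      simp only [mul_ite, mul_one, mul_zero] at hgi
      rw [Finset.sum_ite_eq Finset.univ i g] at hgi
      simpa using hgi
    set W := (clSpan (x '' σ ∪ y '' σᶜ))ᗮ with hW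
    let w : Fin m → W := fun i => ⟨v i, hvW i⟩
    have hliw : LinearIndependent ℂ w := by
      apply LinearIndependent.of_comp W.subtype
      exact hli
    have hsp : ⊤ ≤ Submodule.span ℂ (Set.range w) := by
      rintro ⟨h, hh⟩ -
      have hrep := hspan h hh
      have heq : (⟨h, hh⟩ : W) = ∑ i : Fin m, (⟪b (i : ℕ), h⟫ : ℂ) • w i := by
        apply Subtype.ext
        refine hrep.trans ?_
        simp [w]
      rw [heq]
      exact Submodule.sum_mem _ fun i _ =>
        Submodule.smul_mem _ _ (Submodule.subset_span ⟨i, rfl⟩)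
    let B : Module.Basis (Fin m) ℂ W := Module.Basis.mk hliw hsp
    rw [rank_eq_card_basis B]
    simp
  -- infinite case
  have hinf : ∀ σ : Set ℕ, σ.Infinite →
      Module.rank ℂ ↥((clSpan (x '' σ ∪ y '' σᶜ))ᗮ) = 0 := by
    intro σ hσ
    have hbot : (clSpan (x '' σ ∪ y '' σᶜ))ᗮ = ⊥ := by
      rw [Submodule.eq_bot_iff]
      intro h hh
      obtain ⟨h1, h2⟩ := (hmem σ h).mp hh
      have hσ' : (setOf (· ∈ σ)).Infinite := by exact hσ
      set t : ℕ → ℕ := fun n => Nat.nth (· ∈ σ) n with htdef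
      have hts : StrictMono t := Nat.nth_strictMono hσ'
      have htm : ∀ n, t n ∈ σ := fun n => Nat.nth_mem_of_infinite hσ' n
      have hc0 : ∀ j < m, (⟪b j, h⟫ : ℂ) = 0 := by
        apply poly_coeffs_zero' m _ t hts
        have key : ∀ n : ℕ, ∑ j ∈ Finset.range m, (⟪b j, h⟫ : ℂ) * ((t n : ℂ) + 1) ^ j
            = - ⟪b (m + t n), h⟫ := by
          intro n
          have h1n := h1 (t n) (htm n)
          rw [Finset.sum_congr rfl fun j _ =>
            mul_comm (⟪b j, h⟫ : ℂ) (((t n : ℂ) + 1) ^ j)]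
          linear_combination h1n
        rw [show (fun n : ℕ => ∑ j ∈ Finset.range m, (⟪b j, h⟫ : ℂ) * ((t n : ℂ) + 1) ^ j)
            = fun n : ℕ => - (⟪b (m + t n), h⟫ : ℂ) from funext key]
        have htt : Tendsto (fun n : ℕ => m + t n) atTop atTop := by
          apply tendsto_atTop_mono (f := fun n : ℕ => n)
          · intro n; have : n ≤ t n := hts.le_apply; omega
          · exact tendsto_id
        have htend := (inner_basis_tendsto' b h).comp htt
        simpa using htend.neg
      apply eq_zero_of_inner_basis' b h
      intro n
      rcases Nat.lt_or_ge n m with hn | hn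
      · exact hc0 n hn
      · obtain ⟨k, rfl⟩ : ∃ k, n = m + k := ⟨n - m, by omega⟩
        by_cases hk : k ∈ σ
        · have h1k := h1 k hk
          rwa [Finset.sum_eq_zero (fun j hj => by
            rw [hc0 j (Finset.mem_range.mp hj), mul_zero]), zero_add] at h1k
        · exact h2 k hk
    rw [hbot]
    exact rank_bot ℂ H
  refine ⟨hcomp, hmin, hbio, hfin, hinf, ?_⟩
  ext d
  simp only [Set.mem_setOf_eq, Set.mem_insert_iff, Set.mem_singleton_iff]
  constructor
  · rintro ⟨σ, rfl⟩
    rcases Set.finite_or_infinite σ with hf | hi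
    · exact Or.inr (hfin σ hf)
    · exact Or.inl (hinf σ hi)
  · rintro (rfl | rfl)
    · exact ⟨Set.univ, (hinf _ Set.infinite_univ).symm⟩
    · exact ⟨∅, (hfin _ Set.finite_empty).symm⟩
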